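/- arXiv:1809.00775 — 3 statements merged into one kernel-verified Lean document; each statement's English description precedes it below -/
import Mathlib

section
/- Let M ∈ ℝ^{ν×d} be ζ-Diophantine with constant C_ζ > 0, i.e. d(Mx + θ, θ) ≥ C_ζ/‖x‖^ζ on the torus 𝕋^ν for all x ∈ ℤ^d \ {0}. Suppose h : 𝕋^ν → [0,∞) is continuous with a single zero θ̃ and satisfies h(θ') ≥ c·d(θ',θ̃)^σ for some c > 0. If α > γσζ, then for all sufficiently large L, for any phase θ, the number of x ∈ ℤ^d with ‖x‖ ≤ L satisfying h(Mx + θ) < L^{-α/γ} is at most 1. -/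
open scoped BigOperators

/-- If `M` is ζ-Diophantine and `h` has a single zero `θt` with power-law lower bound
`h(θ') ≥ c·d(θ',θt)^σ`, and `α > γσζ`, then for all large `L` at most one `x` with
`‖x‖ ≤ L` satisfies `h(Mx+θ) < L^{-α/γ}`. -/
theorem stmt0 (ν d : ℕ) (hd : 0 < d) (M : Matrix (Fin ν) (Fin d) ℝ)
    (ζ Cζ c σ α γ : ℝ) (hCζ : 0 < Cζ) (hc : 0 < c) (hσ : 0 < σ) (hζ : 0 < ζ)
    (hγ : 0 < γ)
    (hDio : ∀ x : Fin d → ℤ, x ≠ 0 → ∀ θ : Fin ν → AddCircle (1 : ℝ),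
      Cζ / ‖x‖ ^ ζ ≤
        dist (fun i => ((∑ j, M i j * (x j : ℝ) : ℝ) : AddCircle (1 : ℝ)) + θ i) θ)
    (h : (Fin ν → AddCircle (1 : ℝ)) → ℝ) (hcont : Continuous h) (hnn : ∀ θ, 0 ≤ h θ)
    (θt : Fin ν → AddCircle (1 : ℝ))
    (hzero : ∀ θ', h θ' = 0 ↔ θ' = θt)
    (hlow : ∀ θ', c * dist θ' θt ^ σ ≤ h θ')
    (hα : α > γ * σ * ζ) :
    ∃ L0 : ℝ, ∀ L ≥ L0, ∀ θ : Fin ν → AddCircle (1 : ℝ),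
      ∀ x₁ x₂ : Fin d → ℤ, ‖x₁‖ ≤ L → ‖x₂‖ ≤ L →
        h (fun i => ((∑ j, M i j * (x₁ j : ℝ) : ℝ) : AddCircle (1 : ℝ)) + θ i)
          < L ^ (-(α / γ)) →
        h (fun i => ((∑ j, M i j * (x₂ j : ℝ) : ℝ) : AddCircle (1 : ℝ)) + θ i)
          < L ^ (-(α / γ)) →
        x₁ = x₂ := by
  set β : ℝ := α / γ with hβdef
  have hβ : σ * ζ < β := by
    rw [hβdef, lt_div_iff₀ hγ]
    nlinarith
  have he : 0 < β / σ - ζ := by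
    have : ζ < β / σ := by rw [lt_div_iff₀ hσ]; nlinarith
    linarith
  set K : ℝ := 2 * c ^ (-(1 / σ)) * 2 ^ ζ with hKdef
  have hK : 0 < K := by
    have := Real.rpow_pos_of_pos hc (-(1 / σ))
    have := Real.rpow_pos_of_pos (by norm_num : (0:ℝ) < 2) ζ
    positivity
  -- get L0 with the key smallness property
  have htend : Filter.Tendsto (fun L : ℝ => K * L ^ (-(β / σ - ζ)))
      Filter.atTop (nhds 0) := by
    have := (tendsto_rpow_neg_atTop he).const_mul K
    simpa using this
  have hev : ∀ᶠ L : ℝ in Filter.atTop,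
      K * L ^ (-(β / σ - ζ)) < Cζ ∧ 1 ≤ L := by
    filter_upwards [htend.eventually_lt_const hCζ, Filter.eventually_ge_atTop (1:ℝ)]
      with L h1 h2
    exact ⟨h1, h2⟩
  obtain ⟨L0, hL0⟩ := Filter.eventually_atTop.1 hev
  refine ⟨L0, fun L hL θ x₁ x₂ hx₁ hx₂ hh₁ hh₂ => ?_⟩
  obtain ⟨hKL, hL1⟩ := hL0 L hL
  have hLpos : (0:ℝ) < L := lt_of_lt_of_le one_pos hL1
  by_contra hne
  -- the two torus points
  set p₁ : Fin ν → AddCircle (1:ℝ) :=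
    fun i => ((∑ j, M i j * (x₁ j : ℝ) : ℝ) : AddCircle (1 : ℝ)) + θ i with hp₁
  set p₂ : Fin ν → AddCircle (1:ℝ) :=
    fun i => ((∑ j, M i j * (x₂ j : ℝ) : ℝ) : AddCircle (1 : ℝ)) + θ i with hp₂
  set r : ℝ := (L ^ (-β) / c) ^ (1 / σ) with hrdef
  have hrpos : 0 < r := by
    apply Real.rpow_pos_of_pos
    exact div_pos (Real.rpow_pos_of_pos hLpos _) hc
  have hrσ : r ^ σ = L ^ (-β) / c := by
    rw [hrdef, ← Real.rpow_mul (le_of_lt (div_pos (Real.rpow_pos_of_pos hLpos _) hc)),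
      one_div_mul_cancel hσ.ne', Real.rpow_one]
  -- distances are < r
  have hd : ∀ p : Fin ν → AddCircle (1:ℝ), h p < L ^ (-β) → dist p θt < r := by
    intro p hp
    by_contra hge
    push_neg at hge
    have h1 : r ^ σ ≤ dist p θt ^ σ :=
      Real.rpow_le_rpow hrpos.le hge hσ.le
    have h2 : c * dist p θt ^ σ ≤ h p := hlow p
    rw [hrσ] at h1
    have : L ^ (-β) ≤ c * dist p θt ^ σ := by
      rw [div_le_iff₀ hc] at h1
      linarith [mul_comm c (dist p θt ^ σ)]
    linarith
  have hd₁ : dist p₁ θt < r := hd p₁ hh₁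
  have hd₂ : dist p₂ θt < r := hd p₂ hh₂
  have hdist : dist p₁ p₂ < 2 * r := by
    calc dist p₁ p₂ ≤ dist p₁ θt + dist θt p₂ := dist_triangle _ _ _
    _ < r + r := by rw [dist_comm θt p₂]; linarith
    _ = 2 * r := by ring
  -- Diophantine lower bound
  have hxne : x₁ - x₂ ≠ 0 := sub_ne_zero_of_ne hne
  have hDio' := hDio (x₁ - x₂) hxne p₂
  have hpt : (fun i => ((∑ j, M i j * ((x₁ - x₂) j : ℝ) : ℝ) : AddCircle (1 : ℝ)) + p₂ i)
      = p₁ := by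
    funext i
    rw [hp₁, hp₂]
    have hsum : (∑ j, M i j * ((x₁ - x₂) j : ℝ))
        = (∑ j, M i j * (x₁ j : ℝ)) - (∑ j, M i j * (x₂ j : ℝ)) := by
      rw [← Finset.sum_sub_distrib]
      congr 1; funext j
      push_cast [Pi.sub_apply]
      ring
    rw [hsum, sub_eq_add_neg, QuotientAddGroup.mk_add, QuotientAddGroup.mk_neg]
    rw [add_assoc, neg_add_cancel_left]
  rw [hpt] at hDio'
  -- norm bounds
  have hnormle : ‖x₁ - x₂‖ ≤ 2 * L := by
    calc ‖x₁ - x₂‖ ≤ ‖x₁‖ + ‖x₂‖ := norm_sub_le _ _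
    _ ≤ 2 * L := by linarith
  have hnormpos : 0 < ‖x₁ - x₂‖ := norm_pos_iff.2 hxne
  have hpowle : ‖x₁ - x₂‖ ^ ζ ≤ (2 * L) ^ ζ :=
    Real.rpow_le_rpow hnormpos.le hnormle hζ.le
  have hpowpos : 0 < ‖x₁ - x₂‖ ^ ζ := Real.rpow_pos_of_pos hnormpos ζ
  have h2Lpos : (0:ℝ) < (2 * L) ^ ζ := Real.rpow_pos_of_pos (by linarith) ζ
  have hmain : Cζ / (2 * L) ^ ζ ≤ Cζ / ‖x₁ - x₂‖ ^ ζ := by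
    gcongr
  have hchain : Cζ / (2 * L) ^ ζ < 2 * r :=
    lt_of_le_of_lt (hmain.trans hDio') hdist
  -- final contradiction via the K estimate
  have hkey : 2 * r * (2 * L) ^ ζ = K * L ^ (-(β / σ - ζ)) := by
    have hcσ : c ^ (1 / σ) ≠ 0 := (Real.rpow_pos_of_pos hc _).ne'
    rw [hrdef, hKdef,
      Real.div_rpow (Real.rpow_nonneg hLpos.le _) hc.le,
      ← Real.rpow_mul hLpos.le,
      Real.mul_rpow (by norm_num : (0:ℝ) ≤ 2) hLpos.le,
      Real.rpow_neg hc.le,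
      show (-(β / σ - ζ)) = -β * (1 / σ) + ζ by ring,
      Real.rpow_add hLpos]
    field_simp
  have : Cζ < 2 * r * (2 * L) ^ ζ := by
    rw [div_lt_iff₀ h2Lpos] at hchain
    linarith
  rw [hkey] at this
  linarith
end

section
/- Let M ∈ ℝ^{ν×d} be ζ-Diophantine and h : 𝕋^ν → [0,∞) continuous with zero set h^{-1}(0) of finite cardinality R, and suppose h(θ') ≥ c·min_{θ̃ ∈ h^{-1}(0)} d(θ',θ̃)^σ. If α > γσζ, then for all sufficiently large L and any phase θ, the number of x ∈ ℤ^d with ‖x‖₁ ≤ L such that h(Mx+θ) < L^{-α/γ} is at most R. -/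
open scoped BigOperators

/-- If `M` is ζ-Diophantine and `h` has finite zero set of cardinality `R`, with
`h(θ') ≥ c·min_{θ̃∈h⁻¹(0)} d(θ',θ̃)^σ`, and `α > γσζ`, then for all large `L` the number of
`x ∈ ℤ^d` with `‖x‖₁ ≤ L` and `h(Mx+θ) < L^{-α/γ}` is at most `R`. -/
theorem stmt1 (ν d : ℕ) (hd : 0 < d) (M : Matrix (Fin ν) (Fin d) ℝ)
    (ζ Cζ c σ α γ : ℝ) (hCζ : 0 < Cζ) (hc : 0 < c) (hσ : 0 < σ) (hζ : 0 < ζ)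
    (hγ : 0 < γ)
    (hDio : ∀ x : Fin d → ℤ, x ≠ 0 → ∀ θ : Fin ν → AddCircle (1 : ℝ),
      Cζ / ‖x‖ ^ ζ ≤
        dist (fun i => ((∑ j, M i j * (x j : ℝ) : ℝ) : AddCircle (1 : ℝ)) + θ i) θ)
    (h : (Fin ν → AddCircle (1 : ℝ)) → ℝ) (hcont : Continuous h) (hnn : ∀ θ, 0 ≤ h θ)
    (hfin : {θ' | h θ' = 0}.Finite)
    (hlow : ∀ θ', ∃ θt, h θt = 0 ∧ c * dist θ' θt ^ σ ≤ h θ')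
    (hα : α > γ * σ * ζ) :
    ∃ L0 : ℝ, ∀ L ≥ L0, ∀ θ : Fin ν → AddCircle (1 : ℝ),
      {x : Fin d → ℤ | (∑ i, (|x i| : ℝ)) ≤ L ∧
        h (fun i => ((∑ j, M i j * (x j : ℝ) : ℝ) : AddCircle (1 : ℝ)) + θ i)
          < L ^ (-(α / γ))}.encard ≤ {θ' | h θ' = 0}.ncard := by
  set β : ℝ := α / (γ * σ) with hβ
  have hβζ : ζ < β := by
    rw [hβ, lt_div_iff₀ (by positivity)]
    nlinarith [hα]
  have hK : (0:ℝ) < Cζ * c ^ (1/σ) / (2 * 2 ^ ζ) := by positivity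
  have hev : ∀ᶠ L : ℝ in Filter.atTop,
      2 * (L ^ (-(α/γ)) / c) ^ (1/σ) ≤ Cζ / (2*L) ^ ζ ∧ 1 ≤ L := by
    have htend : Filter.Tendsto (fun L : ℝ => L ^ (ζ - β)) Filter.atTop (nhds 0) := by
      have := tendsto_rpow_neg_atTop (y := β - ζ) (by linarith)
      simpa [neg_sub] using this
    filter_upwards [htend.eventually_le_const hK, Filter.eventually_ge_atTop (1:ℝ)]
      with L h1 h2
    refine ⟨?_, h2⟩
    have hL0 : (0:ℝ) < L := lt_of_lt_of_le one_pos h2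
    have e1 : (L ^ (-(α/γ)) / c) ^ (1/σ) = L ^ (-β) / c ^ (1/σ) := by
      rw [Real.div_rpow (by positivity) hc.le, ← Real.rpow_mul hL0.le]
      congr 1
      rw [hβ]; field_simp
    have e2 : (2*L) ^ ζ = 2 ^ ζ * L ^ ζ := Real.mul_rpow (by norm_num) hL0.le
    rw [e1, e2, ← mul_div_assoc, div_le_div_iff₀ (by positivity) (by positivity)]
    have e3 : 2 * (L ^ (-β)) * (2 ^ ζ * L ^ ζ) = 2 * 2 ^ ζ * L ^ (ζ - β) := by
      rw [show ζ - β = -β + ζ by ring, Real.rpow_add hL0]; ring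
    rw [e3]
    calc 2 * 2 ^ ζ * L ^ (ζ - β) ≤ 2 * 2 ^ ζ * (Cζ * c ^ (1/σ) / (2 * 2 ^ ζ)) := by
          exact mul_le_mul_of_nonneg_left h1 (by positivity)
      _ = Cζ * c ^ (1/σ) := by field_simp
  obtain ⟨L0, hL0⟩ := Filter.eventually_atTop.mp hev
  refine ⟨L0, fun L hL θ => ?_⟩
  obtain ⟨hineq, hL1⟩ := hL0 L hL
  have hLpos : (0:ℝ) < L := lt_of_lt_of_le one_pos hL1
  set Z := {θ' | h θ' = 0} with hZ
  set p : (Fin d → ℤ) → (Fin ν → AddCircle (1:ℝ)) :=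
    fun x => fun i => ((∑ j, M i j * (x j : ℝ) : ℝ) : AddCircle (1 : ℝ)) + θ i with hp
  set S := {x : Fin d → ℤ | (∑ i, (|x i| : ℝ)) ≤ L ∧ h (p x) < L ^ (-(α / γ))} with hS
  set f : (Fin d → ℤ) → (Fin ν → AddCircle (1:ℝ)) :=
    fun x => Classical.choose (hlow (p x)) with hf
  have hfZ : ∀ x, f x ∈ Z := fun x => (Classical.choose_spec (hlow (p x))).1
  have hfd : ∀ x, c * dist (p x) (f x) ^ σ ≤ h (p x) :=
    fun x => (Classical.choose_spec (hlow (p x))).2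
  -- distance bound for x ∈ S
  have hdistS : ∀ x ∈ S, dist (p x) (f x) < (L ^ (-(α/γ)) / c) ^ (1/σ) := by
    intro x hx
    have h1 : dist (p x) (f x) ^ σ < L ^ (-(α/γ)) / c := by
      rw [lt_div_iff₀ hc]
      calc dist (p x) (f x) ^ σ * c = c * dist (p x) (f x) ^ σ := by ring
        _ ≤ h (p x) := hfd x
        _ < L ^ (-(α/γ)) := hx.2
    have := Real.rpow_lt_rpow (by positivity) h1 (by positivity : (0:ℝ) < 1/σ)
    rwa [← Real.rpow_mul dist_nonneg, mul_one_div, div_self hσ.ne', Real.rpow_one] at this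
  have hinj : Set.InjOn f S := by
    intro x hx y hy hfxy
    by_contra hne
    have hxy : x - y ≠ 0 := sub_ne_zero.mpr hne
    -- norm bound
    have hnormle : ‖x - y‖ ≤ 2 * L := by
      have hb : ∀ z : Fin d → ℤ, (∑ i, (|z i| : ℝ)) ≤ L → ∀ i, (|z i| : ℝ) ≤ L := by
        intro z hz i
        refine le_trans ?_ hz
        exact Finset.single_le_sum (f := fun i => (|z i| : ℝ)) (fun j _ => abs_nonneg _) (Finset.mem_univ i)
      rw [pi_norm_le_iff_of_nonneg (by positivity)]
      intro i
      have := hb x hx.1 i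
      have := hb y hy.1 i
      rw [Int.norm_eq_abs]
      simp only [Pi.sub_apply]
      push_cast
      calc |(x i : ℝ) - y i| ≤ |(x i : ℝ)| + |(y i : ℝ)| := abs_sub _ _
        _ ≤ L + L := by push_cast at *; linarith
        _ = 2 * L := by ring
    have hnorm1 : (1:ℝ) ≤ ‖x - y‖ := by
      obtain ⟨i, hi⟩ := Function.ne_iff.mp hne
      have h1 : (1:ℝ) ≤ ‖(x - y) i‖ := by
        rw [Int.norm_eq_abs]
        have : (x - y) i ≠ 0 := by simpa [sub_eq_zero] using hi
        exact_mod_cast Int.one_le_abs this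
      exact h1.trans (norm_le_pi_norm (x - y) i)
    -- Diophantine lower bound
    have hdio := hDio (x - y) hxy (p y)
    have hpe : (fun i => ((∑ j, M i j * ((x - y) j : ℝ) : ℝ) : AddCircle (1 : ℝ)) + p y i)
        = p x := by
      funext i
      have : (∑ j, M i j * ((x - y) j : ℝ)) =
          (∑ j, M i j * (x j : ℝ)) - (∑ j, M i j * (y j : ℝ)) := by
        rw [← Finset.sum_sub_distrib]
        refine Finset.sum_congr rfl fun j _ => ?_
        simp only [Pi.sub_apply]
        push_cast; ring
      rw [this, hp, sub_eq_add_neg, QuotientAddGroup.mk_add, QuotientAddGroup.mk_neg]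
      beta_reduce
      rw [add_assoc, neg_add_cancel_left]
    rw [hpe] at hdio
    -- upper bound on dist p x p y
    have hup : dist (p x) (p y) < 2 * (L ^ (-(α/γ)) / c) ^ (1/σ) := by
      calc dist (p x) (p y) ≤ dist (p x) (f x) + dist (f y) (p y) := by
            rw [hfxy]; exact dist_triangle _ _ _
        _ < (L ^ (-(α/γ)) / c) ^ (1/σ) + (L ^ (-(α/γ)) / c) ^ (1/σ) := by
            have := hdistS x hx
            have h2 := hdistS y hy
            rw [dist_comm] at h2
            linarith
        _ = 2 * (L ^ (-(α/γ)) / c) ^ (1/σ) := by ring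
    -- lower bound
    have hlo : Cζ / (2*L) ^ ζ ≤ dist (p x) (p y) := by
      refine le_trans ?_ hdio
      apply div_le_div_of_nonneg_left hCζ.le (by positivity)
      exact Real.rpow_le_rpow (norm_nonneg _) hnormle hζ.le
    linarith
  calc S.encard = (f '' S).encard := (hinj.encard_image).symm
    _ ≤ Z.encard := Set.encard_mono (by rintro _ ⟨x, hx, rfl⟩; exact hfZ x)
    _ = (Z.ncard : ℕ∞) := by
        rw [hfin.encard_eq_coe_toFinset_card, Set.ncard_eq_toFinset_card _ hfin]
end

section
/- Suppose M ∈ ℝ^{ν×d} is ζ-Diophantine, h : 𝕋^ν → [0,∞) is σ-admissible with zero set {θ̃₁,…,θ̃_R}, and x₁, x₂ ∈ ℤ^d are distinct points with h(Mx_j + θ) < L^{-α/γ} (j = 1,2) whose images Mx_j + θ both lie within distance (1/c)L^{-α/(σγ)} of the same zero θ̃. Then ‖x₁ - x₂‖ > C₁ L^{α/(σγζ)} for a constant C₁ depending only on C_ζ and c. -/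
open scoped BigOperators

/-- Separation of resonances: distinct `x₁, x₂` whose images under the ζ-Diophantine shift both
lie within `(1/c)·L^{-α/(σγ)}` of a common zero `θ̃` of a σ-admissible `h`, and which are both
`L^{-α/γ}`-resonant, must satisfy `‖x₁-x₂‖ > C₁·L^{α/(σγζ)}` with `C₁ = C₁(C_ζ, c) > 0`. -/
theorem stmt2 (ν d : ℕ) (hd : 0 < d)
    (ζ Cζ c σ α γ : ℝ) (hCζ : 0 < Cζ) (hc : 0 < c) (hσ : 0 < σ) (hζ : 0 < ζ)
    (hγ : 0 < γ) (hα : 0 < α) :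
    ∃ C₁ > 0, ∀ (M : Matrix (Fin ν) (Fin d) ℝ),
      (∀ x : Fin d → ℤ, x ≠ 0 → ∀ θ : Fin ν → AddCircle (1 : ℝ),
        Cζ / ‖x‖ ^ ζ ≤
          dist (fun i => ((∑ j, M i j * (x j : ℝ) : ℝ) : AddCircle (1 : ℝ)) + θ i) θ) →
      ∀ (h : (Fin ν → AddCircle (1 : ℝ)) → ℝ), Continuous h →
      ∀ θt : Fin ν → AddCircle (1 : ℝ), h θt = 0 →
      (∀ θ', c * dist θ' θt ^ σ ≤ h θ') →
      ∀ (θ : Fin ν → AddCircle (1 : ℝ)) (L : ℝ), 1 ≤ L →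
      ∀ x₁ x₂ : Fin d → ℤ, x₁ ≠ x₂ →
        h (fun i => ((∑ j, M i j * (x₁ j : ℝ) : ℝ) : AddCircle (1 : ℝ)) + θ i)
          < L ^ (-(α / γ)) →
        h (fun i => ((∑ j, M i j * (x₂ j : ℝ) : ℝ) : AddCircle (1 : ℝ)) + θ i)
          < L ^ (-(α / γ)) →
        dist (fun i => ((∑ j, M i j * (x₁ j : ℝ) : ℝ) : AddCircle (1 : ℝ)) + θ i) θt
          ≤ (1/c) * L ^ (-(α / (σ * γ))) →
        dist (fun i => ((∑ j, M i j * (x₂ j : ℝ) : ℝ) : AddCircle (1 : ℝ)) + θ i) θt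
          ≤ (1/c) * L ^ (-(α / (σ * γ))) →
        C₁ * L ^ (α / (σ * γ * ζ)) < ‖x₁ - x₂‖ := by
  refine ⟨(Cζ * c / 2) ^ ζ⁻¹ / 2, by positivity, ?_⟩
  intro M hDio h _hcont θt _hz _hadm θ L hL x₁ x₂ hne _h1 _h2 d1 d2
  set y : Fin d → ℤ := x₁ - x₂ with hy
  have hy0 : y ≠ 0 := sub_ne_zero.mpr hne
  have hyn : (0:ℝ) < ‖y‖ := norm_pos_iff.mpr hy0
  have key := hDio y hy0 (fun i => ((∑ j, M i j * (x₂ j : ℝ) : ℝ) : AddCircle (1 : ℝ)) + θ i)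
  have hfun : (fun i => ((∑ j, M i j * (y j : ℝ) : ℝ) : AddCircle (1 : ℝ)) +
      (((∑ j, M i j * (x₂ j : ℝ) : ℝ) : AddCircle (1 : ℝ)) + θ i)) =
      (fun i => ((∑ j, M i j * (x₁ j : ℝ) : ℝ) : AddCircle (1 : ℝ)) + θ i) := by
    funext i
    have hsum : (∑ j, M i j * (y j : ℝ)) + (∑ j, M i j * (x₂ j : ℝ))
        = ∑ j, M i j * (x₁ j : ℝ) := by
      rw [← Finset.sum_add_distrib]
      refine Finset.sum_congr rfl fun j _ => ?_
      have : (y j : ℝ) = (x₁ j : ℝ) - (x₂ j : ℝ) := by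
        simp [hy, Pi.sub_apply]
      rw [this]; ring
    rw [← add_assoc, ← AddCircle.coe_add, hsum]
  rw [hfun] at key
  set β : ℝ := α / (σ * γ) with hβ
  have hdist : dist (fun i => ((∑ j, M i j * (x₁ j : ℝ) : ℝ) : AddCircle (1 : ℝ)) + θ i)
      (fun i => ((∑ j, M i j * (x₂ j : ℝ) : ℝ) : AddCircle (1 : ℝ)) + θ i)
      ≤ (2 / c) * L ^ (-β) := by
    have htri := dist_triangle_right
      (fun i => ((∑ j, M i j * (x₁ j : ℝ) : ℝ) : AddCircle (1 : ℝ)) + θ i)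
      (fun i => ((∑ j, M i j * (x₂ j : ℝ) : ℝ) : AddCircle (1 : ℝ)) + θ i) θt
    have h2c : (2:ℝ) / c * L ^ (-β) = 1/c * L ^ (-β) + 1/c * L ^ (-β) := by ring
    linarith
  have hLpos : (0:ℝ) < L := lt_of_lt_of_le one_pos hL
  have hLb : (0:ℝ) < L ^ β := Real.rpow_pos_of_pos hLpos _
  have hLnb : L ^ (-β) = (L ^ β)⁻¹ := Real.rpow_neg hLpos.le β
  have key2 : Cζ / ‖y‖ ^ ζ ≤ (2 / c) * (L ^ β)⁻¹ := by
    rw [← hLnb]; exact key.trans hdist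
  have hyζ : (0:ℝ) < ‖y‖ ^ ζ := Real.rpow_pos_of_pos hyn _
  have hmain : Cζ * c / 2 * L ^ β ≤ ‖y‖ ^ ζ := by
    rw [div_le_iff₀ hyζ] at key2
    rw [div_mul_eq_mul_div, div_le_iff₀ (by norm_num : (0:ℝ) < 2)]
    calc Cζ * c * L ^ β ≤ ((2 / c) * (L ^ β)⁻¹ * ‖y‖ ^ ζ) * c * L ^ β := by
          nlinarith [mul_pos hLb (mul_pos (by positivity : (0:ℝ) < c) hLb)]
      _ = ‖y‖ ^ ζ * 2 := by field_simp
  have hpow : (Cζ * c / 2 * L ^ β) ^ ζ⁻¹ ≤ (‖y‖ ^ ζ) ^ ζ⁻¹ :=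
    Real.rpow_le_rpow (by positivity) hmain (by positivity)
  have h1' : (‖y‖ ^ ζ) ^ ζ⁻¹ = ‖y‖ := Real.rpow_rpow_inv hyn.le hζ.ne'
  have h2' : (Cζ * c / 2 * L ^ β) ^ ζ⁻¹
      = (Cζ * c / 2) ^ ζ⁻¹ * L ^ (α / (σ * γ * ζ)) := by
    rw [Real.mul_rpow (by positivity) hLb.le, ← Real.rpow_mul hLpos.le]
    congr 1
    rw [hβ]
    field_simp
  rw [h1', h2'] at hpow
  have hC : (0:ℝ) < (Cζ * c / 2) ^ ζ⁻¹ := by positivity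
  have hLe : (0:ℝ) < L ^ (α / (σ * γ * ζ)) := Real.rpow_pos_of_pos hLpos _
  have hfin : (Cζ * c / 2) ^ ζ⁻¹ / 2 * L ^ (α / (σ * γ * ζ))
      < (Cζ * c / 2) ^ ζ⁻¹ * L ^ (α / (σ * γ * ζ)) := by nlinarith
  exact hfin.trans_le hpow
end
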